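/- arXiv:2305.07274 — 4 statements merged into one kernel-verified Lean document; each statement's English description precedes it below -/
import Mathlib

section
/- For every positive integer n and every quaternary word x ∈ Σ^n, the synthesis time of x equals the L1-norm of its differential word: S(x) = ||D(x)||. -/
/-- A list of integers is quaternary if all entries lie in {1,2,3,4}. -/
def IsQ (x : List ℤ) : Prop := ∀ a ∈ x, 1 ≤ a ∧ a ≤ 4

/-- The alternating quaternary supersequence 1,2,3,4,1,2,3,4,... of length `T`. -/
def altSeq (T : ℕ) : List ℤ := (List.range T).map (fun i => ((i % 4 : ℕ) : ℤ) + 1)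

/-- The synthesis time of `x`: the least `T` such that `x` is a subsequence of `altSeq T`. -/
noncomputable def synTime (x : List ℤ) : ℕ := sInf {T : ℕ | x.Sublist (altSeq T)}

/-- The shifted modulo: the unique element of {1,2,3,4} congruent to `a` mod 4. -/
def mods4 (a : ℤ) : ℤ := (a - 1) % 4 + 1

/-- The differential word of `x`. -/
def diffWord (x : List ℤ) : List ℤ := List.zipWith (fun p c => mods4 (c - p)) (0 :: x) x

/-- The set of quaternary words of length `n` with synthesis time at most `T`. -/
def W (n : ℕ) (T : ℤ) : Set (List ℤ) :=
  {x | x.length = n ∧ IsQ x ∧ (synTime x : ℤ) ≤ T}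

/-- `A n T` is the number of quaternary words of length `n` with synthesis time at most `T`. -/
noncomputable def A (n : ℕ) (T : ℤ) : ℕ := (W n T).ncard

/-- The single-indel ball of `x`. -/
def ball (x : List ℤ) : Set (List ℤ) :=
  {y | y = x ∨ (y.length + 1 = x.length ∧ y.Sublist x) ∨
       (x.length + 1 = y.length ∧ IsQ y ∧ x.Sublist y)}

/-- The auxiliary binary sequence of `x` (as 0/1 naturals). -/
def auxSeq (x : List ℤ) : List ℕ :=
  List.zipWith (fun a b => if a ≤ b then 1 else 0) x x.tail

/-- VT syndrome of a binary word: `∑ i·w_i` with positions starting from 1. -/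
def vtSyn (w : List ℕ) : ℕ := ∑ i ∈ Finset.range w.length, (i + 1) * w.getD i 0

/-- The quaternary VT code. -/
def VTn (n : ℕ) (a : ZMod n) (b : ZMod 4) : Set (List ℤ) :=
  {x | x.length = n ∧ IsQ x ∧ ((vtSyn (auxSeq x) : ℕ) : ZMod n) = a ∧
       ((x.sum : ℤ) : ZMod 4) = b}

/-- The quaternary VT code with synthesis time constraint. -/
def VTnT (n : ℕ) (a : ZMod n) (b : ZMod 4) (T : ℤ) : Set (List ℤ) :=
  {x ∈ VTn n a b | (synTime x : ℤ) ≤ T}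

/-- Cost function: minimal extra time to print `x` after last position `p`. -/
def gCost : ℤ → List ℤ → ℤ
  | _, [] => 0
  | p, c :: xs => mods4 (c - p) + gCost c xs

lemma gCost_nonneg : ∀ (x : List ℤ) (p : ℤ), 0 ≤ gCost p x
  | [], _ => le_refl 0
  | c :: xs, p => by
    have h1 : 1 ≤ mods4 (c - p) := by unfold mods4; omega
    have h2 := gCost_nonneg xs c
    simp only [gCost]; omega

lemma gCost_congr : ∀ (x : List ℤ) (a b : ℤ), (a - b) % 4 = 0 → gCost a x = gCost b x
  | [], _, _, _ => rfl
  | c :: xs, a, b, h => by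
    simp only [gCost]
    have : mods4 (c - a) = mods4 (c - b) := by unfold mods4; omega
    rw [this]

lemma diff_sum_eq : ∀ (x : List ℤ) (prev : ℤ),
    (List.zipWith (fun p c => mods4 (c - p)) (prev :: x) x).sum = gCost prev x
  | [], _ => rfl
  | c :: xs, prev => by
    simp only [List.zipWith, List.sum_cons, gCost, diff_sum_eq xs c]

lemma altSeq_length (T : ℕ) : (altSeq T).length = T := by simp [altSeq]

lemma altSeq_get (T q : ℕ) (h : q < T) :
    (altSeq T)[q]'(by simpa [altSeq_length]) = ((q % 4 : ℕ) : ℤ) + 1 := by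
  simp [altSeq]

lemma drop_sublist_drop (l : List ℤ) (a b : ℕ) (h : a ≤ b) :
    (l.drop b).Sublist (l.drop a) := by
  have : l.drop b = (l.drop a).drop (b - a) := by
    rw [List.drop_drop]; congr 1; omega
  rw [this]; exact List.drop_sublist _ _

lemma cons_sublist_ex {c : ℤ} : ∀ {l xs : List ℤ}, (c :: xs).Sublist l →
    ∃ q, ∃ h : q < l.length, l[q] = c ∧ xs.Sublist (l.drop (q + 1)) := by
  intro l
  induction l with
  | nil => intro xs h; simp at h
  | cons a l ih =>
    intro xs h
    cases h with
    | cons _ h' =>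
      obtain ⟨q, hq, he, hs⟩ := ih h'
      exact ⟨q + 1, by simpa using Nat.succ_lt_succ hq, by simpa using he, by simpa using hs⟩
    | cons_cons _ h' =>
      exact ⟨0, by simp, rfl, by simpa using h'⟩

lemma synth_upper : ∀ (x : List ℤ), IsQ x → ∀ (p T : ℕ), (p : ℤ) + gCost p x ≤ T →
    x.Sublist ((altSeq T).drop p)
  | [], _, _, _, _ => List.nil_sublist _
  | c :: xs, hq, p, T, hT => by
    have hc : 1 ≤ c ∧ c ≤ 4 := hq c (by simp)
    obtain ⟨d, hd1, hd4, hdc⟩ : ∃ d : ℕ, 1 ≤ d ∧ d ≤ 4 ∧ (d : ℤ) = (c - p - 1) % 4 + 1 :=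
      ⟨((c - p - 1) % 4 + 1).toNat, by omega, by omega, by omega⟩
    have hmd : mods4 (c - p) = (d : ℤ) := by unfold mods4; omega
    have hgn := gCost_nonneg xs c
    have hgc : gCost ((p : ℤ) + d) xs = gCost c xs := by
      apply gCost_congr; omega
    have hcost : (p : ℤ) + d + gCost c xs ≤ T := by
      simp only [gCost, hmd] at hT; omega
    have hlt : p + d ≤ T := by omega
    have hxs : xs.Sublist ((altSeq T).drop (p + d)) := by
      apply synth_upper xs (fun a ha => hq a (by simp [ha])) (p + d) T
      push_cast; rw [hgc]; exact hcost
    have hidx : p + d - 1 < (altSeq T).length := by rw [altSeq_length]; omega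
    have hval : (altSeq T)[p + d - 1]'hidx = c := by
      simp only [altSeq, List.getElem_map, List.getElem_range]
      omega
    have hdec : (altSeq T).drop (p + d - 1) = c :: (altSeq T).drop (p + d) := by
      have h1 : p + d - 1 + 1 = p + d := by omega
      rw [List.drop_eq_getElem_cons hidx, hval, h1]
    have : (c :: xs).Sublist ((altSeq T).drop (p + d - 1)) := by
      rw [hdec]; exact hxs.cons₂ c
    exact this.trans (drop_sublist_drop _ p (p + d - 1) (by omega))

lemma synth_lower : ∀ (x : List ℤ) (p T : ℕ), p ≤ T → x.Sublist ((altSeq T).drop p) →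
    (p : ℤ) + gCost p x ≤ T
  | [], p, T, hp, _ => by simp [gCost]; exact_mod_cast hp
  | c :: xs, p, T, hp, hs => by
    obtain ⟨q, hq, he, hsx⟩ := cons_sublist_ex hs
    rw [List.length_drop, altSeq_length] at hq
    have hidx : p + q < (altSeq T).length := by rw [altSeq_length]; omega
    have he' : ((p + q) % 4 : ℤ) + 1 = c := by
      rw [List.getElem_drop] at he
      rw [altSeq_get T (p + q) (by omega)] at he
      push_cast at he ⊢
      omega
    rw [List.drop_drop] at hsx
    have hIH := synth_lower xs (p + (q + 1)) T (by omega) hsx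
    have hgc : gCost ((p : ℤ) + (q + 1)) xs = gCost c xs := by
      apply gCost_congr; omega
    push_cast at hIH
    rw [hgc] at hIH
    simp only [gCost]
    have hm : mods4 (c - p) ≤ (q : ℤ) + 1 := by unfold mods4; omega
    omega

/-- for every quaternary word `x` of positive length `n`,
the synthesis time of `x` equals the L1-norm of its differential word. -/
theorem synTime_eq_sum_diffWord (n : ℕ) (hn : 0 < n) (x : List ℤ)
    (hlen : x.length = n) (hq : IsQ x) :
    (synTime x : ℤ) = (diffWord x).sum := by
  have hg0 : 0 ≤ gCost 0 x := gCost_nonneg x 0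
  have hmem : x.Sublist (altSeq (gCost 0 x).toNat) := by
    have := synth_upper x hq 0 (gCost 0 x).toNat
      (by push_cast; rw [Int.toNat_of_nonneg hg0]; simp)
    simpa using this
  have hne : {T : ℕ | x.Sublist (altSeq T)}.Nonempty := ⟨_, hmem⟩
  have h1 : synTime x ≤ (gCost 0 x).toNat := Nat.sInf_le hmem
  have h2 : (gCost 0 x : ℤ) ≤ synTime x := by
    have hm : x.Sublist (altSeq (synTime x)) := Nat.sInf_mem hne
    have := synth_lower x 0 (synTime x) (Nat.zero_le _) (by simpa using hm)
    simpa using this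
  have hsum : (diffWord x).sum = gCost 0 x := diff_sum_eq x 0
  rw [hsum]
  omega
end

section
/- For every positive integer n and every integer T, the number A(n,T) of quaternary words of length n with synthesis time at most T equals the number of tuples (d_1,…,d_n) ∈ {1,2,3,4}^n with d_1 + ⋯ + d_n ≤ T. -/
/-! ### Auxiliary development -/

lemma mods4_bounds (a : ℤ) : 1 ≤ mods4 a ∧ mods4 a ≤ 4 := by unfold mods4; omega

lemma mods4_congr {a b : ℤ} (h : (4:ℤ) ∣ a - b) : mods4 a = mods4 b := by unfold mods4; omega

lemma mods4_id {a : ℤ} (h1 : 1 ≤ a) (h2 : a ≤ 4) : mods4 a = a := by unfold mods4; omega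

lemma mods4_step (a : ℤ) : mods4 a ≤ mods4 (a - 1) + 1 := by unfold mods4; omega

/-- The differential word with explicit previous symbol. -/
def dW : ℤ → List ℤ → List ℤ
  | _, [] => []
  | p, c :: x => mods4 (c - p) :: dW c x

/-- Inverse construction: from differentials to word. -/
def gW : ℤ → List ℤ → List ℤ
  | _, [] => []
  | p, m :: d => mods4 (p + m) :: gW (mods4 (p + m)) d

lemma dW_length (p : ℤ) (x : List ℤ) : (dW p x).length = x.length := by
  induction x generalizing p with
  | nil => rfl
  | cons c xs ih => simp [dW, ih]

lemma gW_length (p : ℤ) (d : List ℤ) : (gW p d).length = d.length := by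
  induction d generalizing p with
  | nil => rfl
  | cons m d ih => simp [gW, ih]

lemma dW_isQ (p : ℤ) (x : List ℤ) : IsQ (dW p x) := by
  induction x generalizing p with
  | nil => intro a ha; simp [dW] at ha
  | cons c xs ih =>
    intro a ha
    simp only [dW, List.mem_cons] at ha
    rcases ha with h | h
    · subst h; exact mods4_bounds _
    · exact ih c a h

lemma gW_isQ (p : ℤ) (d : List ℤ) : IsQ (gW p d) := by
  induction d generalizing p with
  | nil => intro a ha; simp [gW] at ha
  | cons m d ih =>
    intro a ha
    simp only [gW, List.mem_cons] at ha
    rcases ha with h | h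
    · subst h; exact mods4_bounds _
    · exact ih _ a h

lemma dW_congr {p q : ℤ} (h : (4:ℤ) ∣ p - q) (x : List ℤ) : dW p x = dW q x := by
  cases x with
  | nil => rfl
  | cons c xs =>
    simp only [dW]
    congr 1
    exact mods4_congr (by omega : (4:ℤ) ∣ (c - p) - (c - q))

lemma dW_gW (p : ℤ) (d : List ℤ) (hd : IsQ d) : dW p (gW p d) = d := by
  induction d generalizing p with
  | nil => rfl
  | cons m d ih =>
    have hm := hd m (List.mem_cons_self)
    have hhead : mods4 (mods4 (p + m) - p) = m := by
      have h1 : mods4 (mods4 (p + m) - p) = mods4 m :=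
        mods4_congr (by unfold mods4; omega)
      rw [h1, mods4_id hm.1 hm.2]
    simp only [gW, dW, hhead, ih _ (fun a ha => hd a (List.mem_cons_of_mem _ ha))]

lemma dW_inj {x y : List ℤ} (hx : IsQ x) (hy : IsQ y) (p : ℤ)
    (h : dW p x = dW p y) : x = y := by
  induction x generalizing y p with
  | nil =>
    cases y with
    | nil => rfl
    | cons c ys => simp [dW] at h
  | cons c xs ih =>
    cases y with
    | nil => simp [dW] at h
    | cons c' ys =>
      simp only [dW, List.cons.injEq] at h
      have hc := hx c (List.mem_cons_self)
      have hc' := hy c' (List.mem_cons_self)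
      have hcc : c = c' := by
        have := h.1; unfold mods4 at this; omega
      subst hcc
      congr 1
      exact ih (fun a ha => hx a (List.mem_cons_of_mem _ ha))
        (fun a ha => hy a (List.mem_cons_of_mem _ ha)) c h.2

lemma dW_sum_nonneg (p : ℤ) (x : List ℤ) : 0 ≤ (dW p x).sum := by
  induction x generalizing p with
  | nil => simp [dW]
  | cons c xs ih =>
    simp only [dW, List.sum_cons]
    have := mods4_bounds (c - p)
    have := ih c
    omega

/-- Generalized alternating sequence with phase `s`. -/
def genSeq (s T : ℕ) : List ℤ := (List.range T).map (fun i => (((i + s) % 4 : ℕ) : ℤ) + 1)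

lemma altSeq_eq (T : ℕ) : altSeq T = genSeq 0 T := by simp [altSeq, genSeq]

lemma genSeq_succ (s T : ℕ) :
    genSeq s (T+1) = (((s % 4 : ℕ) : ℤ) + 1) :: genSeq (s+1) T := by
  unfold genSeq
  rw [List.range_succ_eq_map, List.map_cons, List.map_map]
  congr 1
  · simp
  · apply List.map_congr_left
    intro i _
    simp only [Function.comp_apply]
    have h : Nat.succ i + s = i + (s + 1) := by omega
    rw [h]

lemma genSeq_add (s a b : ℕ) :
    genSeq s (a + b) = genSeq s a ++ genSeq (s + a) b := by
  unfold genSeq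
  rw [List.range_add, List.map_append, List.map_map]
  congr 1
  apply List.map_congr_left
  intro i _
  simp only [Function.comp_apply]
  have h : a + i + s = i + (s + a) := by omega
  rw [h]

lemma genSeq_one (s : ℕ) : genSeq s 1 = [((s % 4 : ℕ) : ℤ) + 1] := by
  simp [genSeq, List.range_succ]

lemma cast_mod_four (s : ℕ) : ((s % 4 : ℕ) : ℤ) = (s : ℤ) % 4 := by push_cast; ring

lemma dW_sum_phase_succ (s : ℤ) (x : List ℤ) :
    (dW s x).sum ≤ (dW (s + 1) x).sum + 1 := by
  cases x with
  | nil => simp [dW]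
  | cons c xs =>
    simp only [dW, List.sum_cons]
    have h := mods4_step (c - s)
    have : c - (s + 1) = (c - s) - 1 := by ring
    rw [this]
    omega

lemma sublist_imp_sum_le : ∀ (T : ℕ) (s : ℕ) (x : List ℤ),
    x.Sublist (genSeq s T) → (dW (s : ℤ) x).sum ≤ (T : ℤ) := by
  intro T
  induction T with
  | zero =>
    intro s x hx
    simp only [genSeq, List.range_zero, List.map_nil, List.sublist_nil] at hx
    simp [hx, dW]
  | succ T ih =>
    intro s x hx
    rw [genSeq_succ] at hx
    rw [List.sublist_cons_iff] at hx
    rcases hx with h | ⟨r, rfl, hr⟩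
    · have hle := ih (s + 1) x h
      have h2 := dW_sum_phase_succ (s : ℤ) x
      have hcast : ((s + 1 : ℕ) : ℤ) = (s : ℤ) + 1 := by push_cast; ring
      rw [hcast] at hle
      push_cast
      omega
    · have hir := ih (s + 1) r hr
      simp only [dW, List.sum_cons]
      have h1 : mods4 (((s % 4 : ℕ) : ℤ) + 1 - s) = 1 := by
        rw [cast_mod_four]
        unfold mods4
        omega
      have h2 : dW (((s % 4 : ℕ) : ℤ) + 1) r = dW ((s + 1 : ℕ) : ℤ) r := by
        apply dW_congr
        rw [cast_mod_four]
        push_cast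
        omega
      rw [h1, h2]
      push_cast at hir ⊢
      omega

lemma sum_le_imp_sublist : ∀ (x : List ℤ), IsQ x → ∀ (s T : ℕ),
    (dW (s : ℤ) x).sum ≤ (T : ℤ) → x.Sublist (genSeq s T) := by
  intro x
  induction x with
  | nil => intro _ s T _; exact List.nil_sublist _
  | cons c xs ih =>
    intro hq s T hsum
    have hc := hq c (List.mem_cons_self)
    set m : ℤ := mods4 (c - (s : ℤ)) with hm
    have hmb := mods4_bounds (c - (s : ℤ))
    rw [← hm] at hmb
    simp only [dW, List.sum_cons, ← hm] at hsum
    have htail := dW_sum_nonneg c xs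
    have hmT : m.toNat ≤ T := by omega
    have hTsplit : T = m.toNat + (T - m.toNat) := by omega
    rw [hTsplit, genSeq_add]
    have hmsplit : m.toNat = (m.toNat - 1) + 1 := by omega
    have hend : genSeq s m.toNat = genSeq s (m.toNat - 1) ++ [c] := by
      rw [hmsplit, genSeq_add, genSeq_one]
      congr 2
      rw [cast_mod_four]
      have : ((s + (m.toNat - 1) : ℕ) : ℤ) = (s : ℤ) + m - 1 := by push_cast; omega
      rw [this]
      have hcm : mods4 ((s : ℤ) + m) = c := by
        have h1 : mods4 ((s : ℤ) + m) = mods4 c := by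
          apply mods4_congr
          have : (4:ℤ) ∣ m - (c - s) := by unfold mods4 at hm; omega
          omega
        rw [h1, mods4_id hc.1 hc.2]
      unfold mods4 at hcm
      omega
    rw [hend]
    have hxs : xs.Sublist (genSeq (s + m.toNat) (T - m.toNat)) := by
      apply ih (fun a ha => hq a (List.mem_cons_of_mem _ ha))
      have : dW ((s + m.toNat : ℕ) : ℤ) xs = dW c xs := by
        apply dW_congr
        have : (4:ℤ) ∣ m - (c - s) := by unfold mods4 at hm; omega
        push_cast
        omega
      rw [this]
      push_cast
      omega
    have h2 : (c :: genSeq (s + m.toNat) (T - m.toNat)).Sublist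
        ((genSeq s (m.toNat - 1) ++ [c]) ++ genSeq (s + m.toNat) (T - m.toNat)) := by
      rw [List.append_assoc]
      exact List.sublist_append_right _ _
    exact (List.cons_sublist_cons.mpr hxs).trans h2

lemma synTime_eq {x : List ℤ} (hx : IsQ x) :
    (synTime x : ℤ) = (dW 0 x).sum := by
  have hset : {T : ℕ | x.Sublist (altSeq T)} = {T : ℕ | ((dW 0 x).sum).toNat ≤ T} := by
    ext T
    simp only [Set.mem_setOf_eq, altSeq_eq]
    constructor
    · intro h
      rw [Int.toNat_le]
      exact_mod_cast sublist_imp_sum_le T 0 x (by exact_mod_cast h)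
    · intro h
      have := sum_le_imp_sublist x hx 0 T (by rw [Int.toNat_le] at h; exact_mod_cast h)
      exact_mod_cast this
  unfold synTime
  rw [hset]
  have : sInf {T : ℕ | ((dW 0 x).sum).toNat ≤ T} = ((dW 0 x).sum).toNat := by
    apply le_antisymm
    · exact Nat.sInf_le (by simp)
    · exact le_csInf ⟨((dW 0 x).sum).toNat, (le_refl _ : ((dW 0 x).sum).toNat ≤ ((dW 0 x).sum).toNat)⟩ (fun b hb => hb)
  rw [this]
  rw [Int.toNat_of_nonneg (dW_sum_nonneg 0 x)]

/-- `A n T` equals the number of tuples `(d_1,…,d_n) ∈ {1,2,3,4}^n`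
with `d_1 + ⋯ + d_n ≤ T`. -/
theorem A_eq_card_tuples (n : ℕ) (hn : 0 < n) (T : ℤ) :
    A n T =
      {d : Fin n → ℤ | (∀ i, 1 ≤ d i ∧ d i ≤ 4) ∧ ∑ i, d i ≤ T}.ncard := by
  classical
  -- List-level target set
  set D : Set (List ℤ) := {d | d.length = n ∧ IsQ d ∧ d.sum ≤ T} with hD
  have hW : W n T = {x | x.length = n ∧ IsQ x ∧ (dW 0 x).sum ≤ T} := by
    ext x
    simp only [W, Set.mem_setOf_eq]
    constructor
    · rintro ⟨h1, h2, h3⟩; exact ⟨h1, h2, by rwa [synTime_eq h2] at h3⟩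
    · rintro ⟨h1, h2, h3⟩; exact ⟨h1, h2, by rwa [synTime_eq h2]⟩
  have himg : dW 0 '' (W n T) = D := by
    ext d
    constructor
    · rintro ⟨x, hx, rfl⟩
      rw [hW] at hx
      exact ⟨by rw [dW_length]; exact hx.1, dW_isQ 0 x, hx.2.2⟩
    · rintro ⟨h1, h2, h3⟩
      refine ⟨gW 0 d, ?_, dW_gW 0 d h2⟩
      rw [hW]
      refine ⟨by rw [gW_length]; exact h1, gW_isQ 0 d, ?_⟩
      rw [dW_gW 0 d h2]; exact h3
  have hinj : Set.InjOn (dW 0) (W n T) := by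
    intro x hx y hy h
    rw [hW] at hx hy
    exact dW_inj hx.2.1 hy.2.1 0 h
  have h1 : A n T = D.ncard := by
    rw [A, ← Set.ncard_image_of_injOn hinj, himg]
  rw [h1]
  -- Now tuples to lists via List.ofFn
  have himg2 : List.ofFn '' {d : Fin n → ℤ | (∀ i, 1 ≤ d i ∧ d i ≤ 4) ∧ ∑ i, d i ≤ T} = D := by
    ext l
    constructor
    · rintro ⟨f, hf, rfl⟩
      refine ⟨List.length_ofFn, ?_, by rw [List.sum_ofFn]; exact hf.2⟩
      intro a ha
      rw [List.mem_ofFn] at ha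
      obtain ⟨i, rfl⟩ := ha
      exact hf.1 i
    · rintro ⟨h1, h2, h3⟩
      refine ⟨fun i => l.get (Fin.cast h1.symm i), ⟨?_, ?_⟩, ?_⟩
      · intro i; exact h2 _ (List.get_mem _ _)
      · have he : List.ofFn (fun i : Fin n => l.get (Fin.cast h1.symm i)) = l := by
          apply List.ext_getElem
          · simp [h1]
          · intro i hi1 hi2
            simp [List.getElem_ofFn]
        rw [← he, List.sum_ofFn] at h3
        exact h3
      · apply List.ext_getElem
        · simp [h1]
        · intro i hi1 hi2
          simp [List.getElem_ofFn]
  rw [← himg2, Set.ncard_image_of_injOn (List.ofFn_injective.injOn)]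
end

section
/- For every positive integer n, every a ∈ ℤ_n and b ∈ ℤ_4, and every pair of words x, y ∈ VT_n(a,b): if B(x) ∩ B(y) ≠ ∅ then x = y. In other words, the quaternary code VT_n(a,b) corrects a single deletion or a single insertion. -/
section VTnAux

set_option linter.unreachableTactic false
set_option linter.unusedTactic false

-- basic aux facts
lemma auxSeq_nil : auxSeq [] = [] := rfl
lemma auxSeq_single (a : ℤ) : auxSeq [a] = [] := rfl
lemma auxSeq_cons_cons (a b : ℤ) (t : List ℤ) :
    auxSeq (a :: b :: t) = (if a ≤ b then 1 else 0) :: auxSeq (b :: t) := rfl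

lemma auxSeq_length (l : List ℤ) : (auxSeq l).length = l.length - 1 := by
  simp [auxSeq, List.length_zipWith]

lemma auxSeq_bits (l : List ℤ) : ∀ b ∈ auxSeq l, b ≤ 1 := by
  induction l with
  | nil => simp [auxSeq_nil]
  | cons a t ih =>
    cases t with
    | nil => simp [auxSeq_single]
    | cons b t' =>
      rw [auxSeq_cons_cons]
      intro c hc
      rcases List.mem_cons.1 hc with h | h
      · subst h; split <;> omega
      · exact ih c h

-- vtSyn facts
lemma sum_getD (t : List ℕ) : ∑ i ∈ Finset.range t.length, t.getD i 0 = t.sum := by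
  induction t with
  | nil => simp
  | cons a t ih =>
    rw [List.length_cons, Finset.sum_range_succ']
    simp only [List.getD_cons_succ, List.getD_cons_zero, ih, List.sum_cons]
    omega

lemma vtSyn_nil : vtSyn [] = 0 := rfl

lemma vtSyn_cons (a : ℕ) (t : List ℕ) : vtSyn (a :: t) = a + t.sum + vtSyn t := by
  unfold vtSyn
  rw [List.length_cons, Finset.sum_range_succ']
  simp only [List.getD_cons_succ, List.getD_cons_zero]
  have : ∀ i ∈ Finset.range t.length, (i+1+1) * t.getD i 0 = (i+1) * t.getD i 0 + t.getD i 0 := by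
    intro i _; ring
  rw [Finset.sum_congr rfl this, Finset.sum_add_distrib, sum_getD]
  ring

lemma vtSyn_insert (m1 : List ℕ) (c : ℕ) (m2 : List ℕ) :
    vtSyn (m1 ++ c :: m2) = vtSyn (m1 ++ m2) + (m1.length + 1) * c + m2.sum := by
  induction m1 with
  | nil => simp [vtSyn_cons]; ring
  | cons a t ih =>
    simp only [List.cons_append, vtSyn_cons, ih, List.sum_append, List.sum_cons, List.length_cons]
    ring


lemma append_factor {α : Type*} {l1 l2 k1 k2 : List α} (h : l1 ++ l2 = k1 ++ k2)
    (hl : l1.length ≤ k1.length) : ∃ mid, k1 = l1 ++ mid ∧ l2 = mid ++ k2 := by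
  rcases List.append_eq_append_iff.1 h with ⟨a, ha1, ha2⟩ | ⟨c, hc1, hc2⟩
  · exact ⟨a, ha1, ha2⟩
  · have hc : c = [] := by
      have := congrArg List.length hc1
      simp at this
      have : c.length = 0 := by omega
      exact List.length_eq_zero_iff.1 this
    subst hc
    exact ⟨[], by simpa using hc1.symm, by simpa using hc2.symm⟩

lemma sum_le_len {l : List ℕ} (hb : ∀ b ∈ l, b ≤ 1) : l.sum ≤ l.length := by
  induction l with
  | nil => simp
  | cons a t ih =>
    simp only [List.sum_cons, List.length_cons]
    have := hb a (by simp)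
    have := ih (fun b hb' => hb b (by simp [hb']))
    omega

lemma all_one_mem : ∀ (l : List ℕ), (∀ b ∈ l, b ≤ 1) → l.sum = l.length → ∀ b ∈ l, b = 1 := by
  intro l
  induction l with
  | nil => simp
  | cons a t ih =>
    intro hb hs
    simp only [List.sum_cons, List.length_cons] at hs
    have ha : a ≤ 1 := hb a (by simp)
    have hbt : ∀ b ∈ t, b ≤ 1 := fun b hb' => hb b (by simp [hb'])
    have hts : t.sum ≤ t.length := sum_le_len hbt
    intro b hbm
    rcases List.mem_cons.1 hbm with h | h
    · omega
    · exact ih hbt (by omega) b h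

lemma all_one_of_sum {l : List ℕ} (hb : ∀ b ∈ l, b ≤ 1) (hs : l.sum = l.length) :
    l = List.replicate l.length 1 :=
  List.eq_replicate_of_mem (all_one_mem l hb hs)

lemma all_zero_of_sum {l : List ℕ} (hs : l.sum = 0) : l = List.replicate l.length 0 := by
  apply List.eq_replicate_of_mem
  intro b hbl
  exact (List.sum_eq_zero_iff.1 hs) b hbl

lemma run_shuffle {α : Type*} (m1 k2 : List α) (r : ℕ) (c : α) :
    m1 ++ c :: (List.replicate r c ++ k2) = (m1 ++ List.replicate r c) ++ c :: k2 := by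
  have key : c :: List.replicate r c = List.replicate r c ++ [c] := by
    rw [← List.replicate_succ, List.replicate_succ']
  calc m1 ++ c :: (List.replicate r c ++ k2)
      = m1 ++ ((c :: List.replicate r c) ++ k2) := by simp
    _ = m1 ++ ((List.replicate r c ++ [c]) ++ k2) := by rw [key]
    _ = (m1 ++ List.replicate r c) ++ c :: k2 := by simp

lemma bin_le (w m1 m2 k1 k2 : List ℕ) (c d : ℕ) (hb : ∀ b ∈ w, b ≤ 1)
    (hc : c ≤ 1) (hd : d ≤ 1) (hm : m1 ++ m2 = w) (hk : k1 ++ k2 = w)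
    (hlen : m1.length ≤ k1.length)
    (hvt : vtSyn (m1 ++ c :: m2) = vtSyn (k1 ++ d :: k2)) :
    m1 ++ c :: m2 = k1 ++ d :: k2 := by
  obtain ⟨mid, hk1, hm2⟩ := append_factor (hm.trans hk.symm) hlen
  subst hk1 hm2
  have hmb : ∀ b ∈ mid, b ≤ 1 := by
    intro b hbm; exact hb b (by rw [← hm]; simp [hbm])
  rw [vtSyn_insert, vtSyn_insert, ← List.append_assoc] at hvt
  simp only [List.sum_append, List.length_append] at hvt
  have hms : mid.sum ≤ mid.length := sum_le_len hmb
  have hc' : c = 0 ∨ c = 1 := by omega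
  have hd' : d = 0 ∨ d = 1 := by omega
  have key : c = d ∧ mid = List.replicate mid.length c := by
    rcases hc' with rfl | rfl <;> rcases hd' with rfl | rfl
    · exact ⟨rfl, by simpa using all_zero_of_sum (by omega)⟩
    · exfalso; omega
    · exfalso; omega
    · exact ⟨rfl, all_one_of_sum hmb (by omega)⟩
  obtain ⟨rfl, hmid⟩ := key
  rw [hmid]
  exact run_shuffle m1 k2 mid.length c

lemma sublist_decomp {α : Type*} : ∀ {z x : List α}, z.Sublist x → x.length = z.length + 1 →
    ∃ l1 s l2, z = l1 ++ l2 ∧ x = l1 ++ s :: l2 := by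
  intro z x h
  induction h with
  | slnil => intro h; simp at h
  | cons a h ih =>
    intro hl
    rename_i z' t
    simp only [List.length_cons] at hl
    have : z' = t := h.eq_of_length (by omega)
    subst this
    exact ⟨[], a, z', by simp⟩
  | cons_cons a h ih =>
    intro hl
    simp only [List.length_cons] at hl
    obtain ⟨l1, s, l2, h1, h2⟩ := ih (by omega)
    exact ⟨a :: l1, s, l2, by simp [h1], by simp [h2]⟩

lemma aux_strip : ∀ (l1 : List ℤ) (u v : List ℤ), u.length = v.length →
    auxSeq (l1 ++ u) = auxSeq (l1 ++ v) → auxSeq u = auxSeq v := by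
  intro l1
  induction l1 with
  | nil => intro u v _ h; simpa using h
  | cons a t ih =>
    intro u v hl h
    apply ih u v hl
    cases htu : t ++ u with
    | nil =>
      obtain ⟨rfl, rfl⟩ := List.append_eq_nil_iff.1 htu
      have : v = [] := by simpa using hl.symm
      subst this; rfl
    | cons b t' =>
      cases htv : t ++ v with
      | nil =>
        exfalso
        obtain ⟨rfl, rfl⟩ := List.append_eq_nil_iff.1 htv
        have : u = [] := by simpa using hl
        subst this; simp at htu
      | cons b' t'' =>
        rw [List.cons_append, List.cons_append, htu, htv, auxSeq_cons_cons, auxSeq_cons_cons] at h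
        exact (List.cons.inj h).2

lemma aux_insert : ∀ (l1 l2 : List ℤ) (s : ℤ), l1 ++ l2 ≠ [] →
    ∃ (m1 m2 : List ℕ) (c : ℕ), c ≤ 1 ∧ auxSeq (l1 ++ l2) = m1 ++ m2 ∧
      auxSeq (l1 ++ s :: l2) = m1 ++ c :: m2 := by
  intro l1
  induction l1 with
  | nil =>
    intro l2 s hne
    cases l2 with
    | nil => simp at hne
    | cons h t =>
      exact ⟨[], auxSeq (h :: t), if s ≤ h then 1 else 0,
        by split <;> omega, by simp, by simp [auxSeq_cons_cons]⟩
  | cons a l1' ih =>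
    intro l2 s _
    cases l1' with
    | nil =>
      cases l2 with
      | nil =>
        exact ⟨[], [], if a ≤ s then 1 else 0, by split <;> omega, by simp [auxSeq_single],
          by simp [auxSeq_cons_cons, auxSeq_single]⟩
      | cons h t =>
        by_cases hb : (if a ≤ s then (1:ℕ) else 0) = (if a ≤ h then 1 else 0)
        · -- first new bit matches old bit: insert second bit
          refine ⟨[if a ≤ h then 1 else 0], auxSeq (h :: t), if s ≤ h then 1 else 0,
            by split <;> omega, by simp [auxSeq_cons_cons], ?_⟩
          simp only [List.cons_append, List.nil_append, auxSeq_cons_cons]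
          rw [← hb]
        · -- second new bit must match old bit: insert first bit
          have hb2 : (if s ≤ h then (1:ℕ) else 0) = (if a ≤ h then 1 else 0) := by
            split_ifs at * <;> first | rfl | (exfalso; omega) | (exfalso; linarith)
          refine ⟨[], (if a ≤ h then (1:ℕ) else 0) :: auxSeq (h :: t), if a ≤ s then 1 else 0,
            by split <;> omega, by simp [auxSeq_cons_cons], ?_⟩
          simp only [List.cons_append, List.nil_append, auxSeq_cons_cons]
          rw [hb2]
    | cons a' r =>
      obtain ⟨m1, m2, c, hc, h1, h2⟩ := ih l2 s (by simp)
      refine ⟨(if a ≤ a' then 1 else 0) :: m1, m2, c, hc, ?_, ?_⟩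
      · rw [List.cons_append, List.cons_append, auxSeq_cons_cons, ← List.cons_append, h1]; rfl
      · rw [List.cons_append, List.cons_append, auxSeq_cons_cons, ← List.cons_append, h2]; rfl

lemma aux_chain : ∀ (mid k2 : List ℤ) (a s : ℤ),
    auxSeq (a :: (mid ++ k2)) = auxSeq (mid ++ s :: k2) →
    List.Chain' (· ≤ ·) (a :: (mid ++ [s])) ∨ List.Chain' (fun p q => q < p) (a :: (mid ++ [s])) := by
  intro mid
  induction mid with
  | nil =>
    intro k2 a s _
    rcases le_or_gt a s with h | h
    · exact Or.inl (by simp [List.Chain', h])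
    · exact Or.inr (by simp [List.Chain', h])
  | cons m1 mid' ih =>
    intro k2 a s h
    simp only [List.cons_append, auxSeq_cons_cons] at h
    cases mid' with
    | nil =>
      simp only [List.nil_append, auxSeq_cons_cons] at h
      have hbit : (if a ≤ m1 then (1:ℕ) else 0) = if m1 ≤ s then 1 else 0 :=
        (List.cons.inj h).1
      rcases le_or_gt a m1 with h1 | h1
      · have h2 : m1 ≤ s := by by_contra h2; simp [h1, h2] at hbit
        exact Or.inl (by simp [List.Chain', h1, h2])
      · have h2 : ¬ m1 ≤ s := by
          intro h2; rw [if_neg (not_le.2 h1), if_pos h2] at hbit; omega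
        exact Or.inr (by simp [List.Chain', h1, not_le.1 h2])
    | cons m2 r =>
      simp only [List.cons_append, auxSeq_cons_cons] at h
      have hbit : (if a ≤ m1 then (1:ℕ) else 0) = if m1 ≤ m2 then 1 else 0 :=
        (List.cons.inj h).1
      have htail : auxSeq (m1 :: ((m2 :: r) ++ k2)) = auxSeq ((m2 :: r) ++ s :: k2) := by
        have := (List.cons.inj h).2
        simpa [auxSeq_cons_cons] using this
      rcases ih k2 m1 s htail with hch | hch
      · -- chain ≤ on m1 :: (m2::r ++ [s]), so m1 ≤ m2
        have hm12 : m1 ≤ m2 := by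
          simp only [List.Chain', List.cons_append, List.isChain_cons_cons] at hch
          exact hch.1
        have ha : a ≤ m1 := by by_contra ha; simp [ha, hm12] at hbit
        exact Or.inl (List.isChain_cons_cons.2 ⟨ha, by simpa [List.Chain'] using hch⟩)
      · have hm12 : m2 < m1 := by
          simp only [List.Chain', List.cons_append, List.isChain_cons_cons] at hch
          exact hch.1
        have ha : m1 < a := by
          by_contra ha
          rw [if_pos (not_lt.1 ha), if_neg (not_le.2 hm12)] at hbit
          omega
        exact Or.inr (List.isChain_cons_cons.2 ⟨ha, by simpa [List.Chain'] using hch⟩)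

lemma recon_le (l1 l2 k1 k2 : List ℤ) (s : ℤ) (hz : l1 ++ l2 = k1 ++ k2)
    (hlen : l1.length ≤ k1.length)
    (haux : auxSeq (l1 ++ s :: l2) = auxSeq (k1 ++ s :: k2)) :
    l1 ++ s :: l2 = k1 ++ s :: k2 := by
  obtain ⟨mid, rfl, rfl⟩ := append_factor hz hlen
  rw [List.append_assoc] at haux
  have hstrip : auxSeq (s :: (mid ++ k2)) = auxSeq (mid ++ s :: k2) := by
    apply aux_strip l1 _ _ (by simp; omega) haux
  rcases aux_chain mid k2 s s hstrip with hch | hch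
  · have hpw := (List.isChain_iff_pairwise.1 hch)
    rw [List.pairwise_cons] at hpw
    have hmid : ∀ m ∈ mid, m = s := by
      intro m hm
      have h1 : s ≤ m := hpw.1 m (by simp [hm])
      have h2 : m ≤ s := by
        have := (List.pairwise_append.1 hpw.2).2.2
        exact this m hm s (by simp)
      omega
    have : mid = List.replicate mid.length s := List.eq_replicate_of_mem hmid
    rw [this]
    exact run_shuffle l1 k2 mid.length s
  · exfalso
    have hpw := (List.isChain_iff_pairwise.1 hch)
    rw [List.pairwise_cons] at hpw
    have : s < s := hpw.1 s (by simp)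
    omega

lemma recon (l1 l2 k1 k2 : List ℤ) (s : ℤ) (hz : l1 ++ l2 = k1 ++ k2)
    (haux : auxSeq (l1 ++ s :: l2) = auxSeq (k1 ++ s :: k2)) :
    l1 ++ s :: l2 = k1 ++ s :: k2 := by
  rcases le_total l1.length k1.length with h | h
  · exact recon_le l1 l2 k1 k2 s hz h haux
  · exact (recon_le k1 k2 l1 l2 s hz.symm h haux.symm).symm


lemma int_eq_of_mod4 {s t : ℤ} (h : ((s : ℤ) : ZMod 4) = ((t : ℤ) : ZMod 4))
    (hs1 : 1 ≤ s) (hs2 : s ≤ 4) (ht1 : 1 ≤ t) (ht2 : t ≤ 4) : s = t := by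
  have hmod := (ZMod.intCast_eq_intCast_iff s t 4).1 h
  obtain ⟨k, hk⟩ := Int.ModEq.dvd hmod
  omega

lemma nat_eq_of_mod {n V e1 e2 : ℕ} (h : ((V + e1 : ℕ) : ZMod n) = ((V + e2 : ℕ) : ZMod n))
    (h1 : e1 < n) (h2 : e2 < n) : e1 = e2 := by
  have hmod := (ZMod.natCast_eq_natCast_iff _ _ _).1 h
  have hme : e1 ≡ e2 [MOD n] := Nat.ModEq.add_left_cancel (Nat.ModEq.refl V) hmod
  rwa [Nat.ModEq, Nat.mod_eq_of_lt h1, Nat.mod_eq_of_lt h2] at hme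

lemma bin (w m1 m2 k1 k2 : List ℕ) (c d : ℕ) (hb : ∀ b ∈ w, b ≤ 1)
    (hc : c ≤ 1) (hd : d ≤ 1) (hm : m1 ++ m2 = w) (hk : k1 ++ k2 = w)
    (hvt : vtSyn (m1 ++ c :: m2) = vtSyn (k1 ++ d :: k2)) :
    m1 ++ c :: m2 = k1 ++ d :: k2 := by
  rcases le_total m1.length k1.length with h | h
  · exact bin_le w m1 m2 k1 k2 c d hb hc hd hm hk h hvt
  · exact (bin_le w k1 k2 m1 m2 d c hb hd hc hk hm h hvt.symm).symm

lemma del_core (n : ℕ) (a : ZMod n) (b : ZMod 4) (x y z : List ℤ)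
    (hx : x ∈ VTn n a b) (hy : y ∈ VTn n a b) (hzx : z.Sublist x) (hzy : z.Sublist y)
    (hzl : z.length + 1 = n) : x = y := by
  obtain ⟨hxl, hxq, hxs, hxb⟩ := hx
  obtain ⟨hyl, hyq, hys, hyb⟩ := hy
  obtain ⟨l1, s, l2, hz1, hx1⟩ := sublist_decomp hzx (by omega)
  obtain ⟨k1, t, k2, hz2, hy1⟩ := sublist_decomp hzy (by omega)
  have hs4 := hxq s (by rw [hx1]; simp)
  have ht4 := hyq t (by rw [hy1]; simp)
  have hsum : ((x.sum : ℤ) : ZMod 4) = ((y.sum : ℤ) : ZMod 4) := hxb.trans hyb.symm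
  have hst : s = t := by
    have hxsum : x.sum = z.sum + s := by
      rw [hx1, hz1]; simp [List.sum_append]; ring
    have hysum : y.sum = z.sum + t := by
      rw [hy1, hz2]; simp [List.sum_append]; ring
    rw [hxsum, hysum] at hsum
    push_cast at hsum
    exact int_eq_of_mod4 (by exact add_left_cancel hsum) hs4.1 hs4.2 ht4.1 ht4.2
  subst hst
  by_cases hz0 : z = []
  · subst hz0
    obtain ⟨rfl, rfl⟩ := List.append_eq_nil_iff.1 hz1.symm
    obtain ⟨rfl, rfl⟩ := List.append_eq_nil_iff.1 hz2.symm
    rw [hx1, hy1]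
  · have hne1 : l1 ++ l2 ≠ [] := by rw [← hz1]; exact hz0
    have hne2 : k1 ++ k2 ≠ [] := by rw [← hz2]; exact hz0
    obtain ⟨m1, m2, c, hc, hm, hmx⟩ := aux_insert l1 l2 s hne1
    obtain ⟨p1, p2, d, hd, hp, hpy⟩ := aux_insert k1 k2 s hne2
    rw [← hz1] at hm; rw [← hz2] at hp
    have hw : ∀ b ∈ auxSeq z, b ≤ 1 := auxSeq_bits z
    have hwl : (auxSeq z).length = n - 1 - 1 := by rw [auxSeq_length]; omega
    -- exact equality of syndromes
    have hsynd : ((vtSyn (auxSeq x) : ℕ) : ZMod n) = ((vtSyn (auxSeq y) : ℕ) : ZMod n) :=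
      hxs.trans hys.symm
    have hxa : auxSeq x = m1 ++ c :: m2 := by rw [hx1]; exact hmx
    have hya : auxSeq y = p1 ++ d :: p2 := by rw [hy1]; exact hpy
    have hm1len : m1.length + m2.length = (auxSeq z).length := by
      rw [hm, List.length_append]
    have hp1len : p1.length + p2.length = (auxSeq z).length := by
      rw [hp, List.length_append]
    have hm2b : m2.sum ≤ m2.length := sum_le_len (fun b hb' => hw b (by rw [hm]; simp [hb']))
    have hp2b : p2.sum ≤ p2.length := sum_le_len (fun b hb' => hw b (by rw [hp]; simp [hb']))
    have hvx : vtSyn (auxSeq x) = vtSyn (auxSeq z) + ((m1.length + 1) * c + m2.sum) := by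
      rw [hxa, vtSyn_insert, ← hm]; ring
    have hvy : vtSyn (auxSeq y) = vtSyn (auxSeq z) + ((p1.length + 1) * d + p2.sum) := by
      rw [hya, vtSyn_insert, ← hp]; ring
    have hce : c = 0 ∨ c = 1 := by omega
    have hde : d = 0 ∨ d = 1 := by omega
    have hz2' : 2 ≤ n := by
      have : z.length ≠ 0 := fun h => hz0 (List.length_eq_zero_iff.1 h)
      omega
    have he1 : (m1.length + 1) * c + m2.sum < n := by rcases hce with rfl | rfl <;> omega
    have he2 : (p1.length + 1) * d + p2.sum < n := by rcases hde with rfl | rfl <;> omega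
    rw [hvx, hvy] at hsynd
    have hee := nat_eq_of_mod hsynd he1 he2
    have hvteq : vtSyn (auxSeq x) = vtSyn (auxSeq y) := by rw [hvx, hvy, hee]
    rw [hxa, hya] at hvteq
    have haux : auxSeq x = auxSeq y := by
      rw [hxa, hya]
      exact bin (auxSeq z) m1 m2 p1 p2 c d hw hc hd hm.symm hp.symm hvteq
    rw [hx1, hy1]
    apply recon l1 l2 k1 k2 s (hz1.symm.trans hz2)
    rw [← hx1, ← hy1]; exact haux


lemma ins_le (n : ℕ) (a : ZMod n) (b : ZMod 4) (x y : List ℤ) (l1 l2 k1 k2 : List ℤ) (c d : ℤ)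
    (hx : x ∈ VTn n a b) (hy : y ∈ VTn n a b) (hx2 : x = l1 ++ l2) (hy2 : y = k1 ++ k2)
    (hv : l1 ++ c :: l2 = k1 ++ d :: k2) (hlen : l1.length ≤ k1.length) : x = y := by
  obtain ⟨mid, hk1, hrest⟩ := append_factor hv hlen
  cases mid with
  | nil =>
    simp only [List.append_nil] at hk1
    subst hk1
    have : l2 = k2 := (List.cons.inj hrest).2
    rw [hx2, hy2, this]
  | cons c' mid' =>
    have hl2 : l2 = mid' ++ d :: k2 := (List.cons.inj hrest).2
    have hzx : (l1 ++ (mid' ++ k2)).Sublist x := by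
      rw [hx2, hl2]
      exact List.Sublist.append_left (List.Sublist.append_left (List.sublist_cons_self d k2) mid') l1
    have hzy : (l1 ++ (mid' ++ k2)).Sublist y := by
      rw [hy2, hk1, List.append_assoc, List.cons_append]
      exact List.Sublist.append_left (List.sublist_cons_self c' (mid' ++ k2)) l1
    have hzl : (l1 ++ (mid' ++ k2)).length + 1 = n := by
      have hxl : x.length = n := hx.1
      rw [hx2, hl2] at hxl
      simp [List.length_append] at hxl ⊢
      omega
    exact del_core n a b x y _ hx hy hzx hzy hzl

lemma ins_core (n : ℕ) (a : ZMod n) (b : ZMod 4) (x y v : List ℤ)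
    (hx : x ∈ VTn n a b) (hy : y ∈ VTn n a b) (hxv : x.Sublist v) (hyv : y.Sublist v)
    (hvl : v.length = n + 1) : x = y := by
  have hxl : x.length = n := hx.1
  have hyl : y.length = n := hy.1
  obtain ⟨l1, c, l2, hx2, hv1⟩ := sublist_decomp hxv (by omega)
  obtain ⟨k1, d, k2, hy2, hv2⟩ := sublist_decomp hyv (by omega)
  have hv : l1 ++ c :: l2 = k1 ++ d :: k2 := hv1.symm.trans hv2
  rcases le_total l1.length k1.length with h | h
  · exact ins_le n a b x y l1 l2 k1 k2 c d hx hy hx2 hy2 hv h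
  · exact (ins_le n a b y x k1 k2 l1 l2 d c hy hx hy2 hx2 hv.symm h).symm


end VTnAux

/-- the VT code `VT_n(a,b)` corrects a single deletion or insertion:
if the single-indel balls of two codewords intersect, the codewords are equal. -/
theorem VTn_single_indel_correcting (n : ℕ) (hn : 0 < n) (a : ZMod n) (b : ZMod 4)
    (x y : List ℤ) (hx : x ∈ VTn n a b) (hy : y ∈ VTn n a b)
    (h : (ball x ∩ ball y).Nonempty) :
    x = y := by

  have hxl : x.length = n := hx.1
  have hyl : y.length = n := hy.1
  obtain ⟨v, hvx, hvy⟩ := h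
  rcases hvx with rfl | ⟨hl1, hs1⟩ | ⟨hl1, _, hs1⟩ <;>
    rcases hvy with h2 | ⟨hl2, hs2⟩ | ⟨hl2, _, hs2⟩
  · exact h2.symm ▸ rfl
  · omega
  · omega
  · exfalso; subst h2; omega
  · exact del_core n a b x y v hx hy hs1 hs2 (by omega)
  · omega
  · exfalso; subst h2; omega
  · omega
  · exact ins_core n a b x y v hx hy hs1 hs2 (by omega)
end

section
/- For every integer n ≥ 2 and every integer T, A(n,T) = A(n−1, T−1) + A(n−1, T−2) + A(n−1, T−3) + A(n−1, T−4). -/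
namespace ARec

def g : ℤ → List ℤ → ℤ
  | _, [] => 0
  | p, c :: y => mods4 (c - p) + g c y

lemma mods4_range (a : ℤ) : 1 ≤ mods4 a ∧ mods4 a ≤ 4 := by unfold mods4; omega

lemma mods4_congr {a b : ℤ} (h : (a - b) % 4 = 0) : mods4 a = mods4 b := by
  unfold mods4; omega

lemma mods4_sub_self (a : ℤ) : (mods4 a - a) % 4 = 0 := by unfold mods4; omega

lemma mods4_eq_self {a : ℤ} (h1 : 1 ≤ a) (h2 : a ≤ 4) : mods4 a = a := by
  unfold mods4; omega

lemma g_nonneg (p : ℤ) (y : List ℤ) : 0 ≤ g p y := by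
  induction y generalizing p with
  | nil => simp [g]
  | cons c y ih =>
    have h := mods4_range (c - p)
    have := ih c
    simp only [g]; omega

lemma g_congr {p q : ℤ} (h : (p - q) % 4 = 0) (y : List ℤ) : g p y = g q y := by
  cases y with
  | nil => rfl
  | cons c y => simp only [g]; rw [mods4_congr (by omega : (c - p - (c - q)) % 4 = 0)]

lemma g_map (y : List ℤ) : ∀ p q s : ℤ, (p - q) % 4 = 0 →
    g p (y.map (fun a => mods4 (a + s))) = g (q - s) y := by
  induction y with
  | nil => intros; rfl
  | cons a y ih =>
    intro p q s h
    simp only [List.map_cons, g]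
    have hm := mods4_sub_self (a + s)
    rw [mods4_congr (by omega : (mods4 (a + s) - p - (a - (q - s))) % 4 = 0),
      ih (mods4 (a + s)) (a + s) s (mods4_sub_self _)]
    simp

def seqFrom (p : ℤ) (L : ℕ) : List ℤ := (List.range L).map (fun (i : ℕ) => mods4 (p + 1 + (i : ℤ)))

lemma altSeq_eq (T : ℕ) : altSeq T = seqFrom 0 T := by
  unfold altSeq seqFrom
  apply List.map_congr_left
  intro i _
  unfold mods4
  push_cast
  omega

lemma seqFrom_succ (p : ℤ) (L : ℕ) :
    seqFrom p (L + 1) = mods4 (p + 1) :: seqFrom (p + 1) L := by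
  unfold seqFrom
  rw [List.range_succ_eq_map, List.map_cons, List.map_map]
  congr 1
  · norm_num
  · apply List.map_congr_left
    intro i _
    simp only [Function.comp_apply]
    congr 1
    push_cast
    ring

lemma sublist_iff (L : ℕ) : ∀ (x : List ℤ) (p : ℤ), IsQ x →
    (x.Sublist (seqFrom p L) ↔ g p x ≤ L) := by
  induction L with
  | zero =>
    intro x p hx
    constructor
    · intro h
      have hnil : x = [] := List.sublist_nil.mp (by simpa [seqFrom] using h)
      subst hnil; simp [g]
    · intro h
      cases x with
      | nil => simp [seqFrom]
      | cons c y =>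
        exfalso
        have h1 := mods4_range (c - p)
        have h2 := g_nonneg c y
        simp only [g] at h
        omega
  | succ L ih =>
    intro x p hx
    cases x with
    | nil =>
      simp only [List.nil_sublist, g, true_iff]
      positivity
    | cons c y =>
      have hc := hx c List.mem_cons_self
      have hy : IsQ y := fun a ha => hx a (List.mem_cons_of_mem _ ha)
      rw [seqFrom_succ]
      constructor
      · intro h
        cases h with
        | cons _ h' =>
          have h1 : g (p + 1) (c :: y) ≤ L := (ih (c :: y) (p + 1) hx).mp h'
          simp only [g] at h1 ⊢
          have h2 : mods4 (c - p) ≤ mods4 (c - (p + 1)) + 1 := by unfold mods4; omega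
          push_cast
          omega
        | cons_cons _ h' =>
          have h1 : g (p + 1) y ≤ L := (ih y (p + 1) hy).mp h'
          simp only [g]
          rw [g_congr (mods4_sub_self (p + 1)) y]
          have h2 : mods4 (mods4 (p + 1) - p) = 1 := by
            have := mods4_sub_self (p + 1)
            rw [mods4_congr (by omega : (mods4 (p + 1) - p - 1) % 4 = 0)]
            decide
          rw [h2]
          push_cast
          omega
      · intro h
        simp only [g] at h
        have hd := mods4_range (c - p)
        by_cases h1 : mods4 (c - p) = 1
        · have hcp : (c - p - 1) % 4 = 0 := by unfold mods4 at h1; omega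
          have hce : c = mods4 (p + 1) := by
            rw [← mods4_eq_self hc.1 hc.2]
            exact mods4_congr (by omega)
          rw [hce]
          apply List.Sublist.cons₂
          apply (ih y (p + 1) hy).mpr
          rw [g_congr (by omega : (p + 1 - c) % 4 = 0) y]
          push_cast at h ⊢
          omega
        · apply List.Sublist.cons
          apply (ih (c :: y) (p + 1) hx).mpr
          simp only [g]
          have h2 : mods4 (c - (p + 1)) = mods4 (c - p) - 1 := by unfold mods4 at h1 ⊢; omega
          push_cast at h ⊢
          omega

lemma synTime_eq {x : List ℤ} (hx : IsQ x) : (synTime x : ℤ) = g 0 x := by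
  have h0 := g_nonneg 0 x
  have hset : {T : ℕ | x.Sublist (altSeq T)} = Set.Ici (g 0 x).toNat := by
    ext T
    simp only [Set.mem_setOf_eq, Set.mem_Ici, altSeq_eq, sublist_iff T x 0 hx]
    omega
  unfold synTime
  rw [hset, csInf_Ici]
  omega

lemma mem_W_iff {n : ℕ} {T : ℤ} {x : List ℤ} :
    x ∈ W n T ↔ x.length = n ∧ IsQ x ∧ g 0 x ≤ T := by
  unfold W
  constructor
  · rintro ⟨h1, h2, h3⟩
    exact ⟨h1, h2, by rwa [synTime_eq h2] at h3⟩
  · rintro ⟨h1, h2, h3⟩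
    exact ⟨h1, h2, by rwa [synTime_eq h2]⟩

lemma W_finite (n : ℕ) (T : ℤ) : (W n T).Finite := by
  apply Set.Finite.subset ((altSeq T.toNat).sublists.toFinset.finite_toSet)
  intro x hx
  obtain ⟨_, hQ, hT⟩ := mem_W_iff.mp hx
  have h0 := g_nonneg 0 x
  simp only [List.coe_toFinset, Set.mem_setOf_eq, List.mem_sublists]
  rw [altSeq_eq]
  exact (sublist_iff _ x 0 hQ).mpr (by omega)

def F (c : ℤ) (y : List ℤ) : List ℤ := c :: y.map (fun a => mods4 (a + c))

lemma g_F {c : ℤ} (hc1 : 1 ≤ c) (hc2 : c ≤ 4) (y : List ℤ) : g 0 (F c y) = c + g 0 y := by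
  simp only [F, g]
  rw [g_map y c c c (by omega), sub_zero, mods4_eq_self hc1 hc2, sub_self]

lemma F_left_inv {c : ℤ} {y : List ℤ} (hy : IsQ y) :
    (y.map (fun a => mods4 (a + c))).map (fun a => mods4 (a - c)) = y := by
  induction y with
  | nil => rfl
  | cons a y ih =>
    have ha := hy a List.mem_cons_self
    have h1 := mods4_sub_self (a + c)
    simp only [List.map_cons, List.cons.injEq]
    refine ⟨?_, ih (fun b hb => hy b (List.mem_cons_of_mem _ hb))⟩
    rw [mods4_congr (by omega : (mods4 (a + c) - c - a) % 4 = 0)]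
    exact mods4_eq_self ha.1 ha.2

lemma F_right_inv {c : ℤ} {y : List ℤ} (hy : IsQ y) :
    (y.map (fun a => mods4 (a - c))).map (fun a => mods4 (a + c)) = y := by
  induction y with
  | nil => rfl
  | cons a y ih =>
    have ha := hy a List.mem_cons_self
    have h1 := mods4_sub_self (a - c)
    simp only [List.map_cons, List.cons.injEq]
    refine ⟨?_, ih (fun b hb => hy b (List.mem_cons_of_mem _ hb))⟩
    rw [mods4_congr (by omega : (mods4 (a - c) + c - a) % 4 = 0)]
    exact mods4_eq_self ha.1 ha.2

lemma F_injOn (c : ℤ) (m : ℕ) (T' : ℤ) : Set.InjOn (F c) (W m T') := by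
  intro y1 h1 y2 h2 h
  have hQ1 := (mem_W_iff.mp h1).2.1
  have hQ2 := (mem_W_iff.mp h2).2.1
  have := congrArg (fun l => l.tail.map (fun a => mods4 (a - c))) h
  simpa [F, F_left_inv hQ1, F_left_inv hQ2] using this

lemma F_mem {c : ℤ} (hc1 : 1 ≤ c) (hc2 : c ≤ 4) {m : ℕ} {T : ℤ} {y : List ℤ}
    (hy : y ∈ W m (T - c)) : F c y ∈ W (m + 1) T := by
  obtain ⟨hl, hQ, hg⟩ := mem_W_iff.mp hy
  apply mem_W_iff.mpr
  refine ⟨by simp [F, hl], ?_, ?_⟩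
  · intro a ha
    rcases List.mem_cons.mp ha with rfl | ha
    · exact ⟨hc1, hc2⟩
    · obtain ⟨b, _, rfl⟩ := List.mem_map.mp ha
      exact mods4_range _
  · rw [g_F hc1 hc2]
    omega

lemma W_eq (m : ℕ) (T : ℤ) :
    W (m + 1) T = F 1 '' W m (T - 1) ∪ F 2 '' W m (T - 2) ∪ F 3 '' W m (T - 3)
      ∪ F 4 '' W m (T - 4) := by
  ext x
  constructor
  · intro hx
    obtain ⟨hlen, hQ, hg⟩ := mem_W_iff.mp hx
    cases x with
    | nil => simp at hlen
    | cons c y' =>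
      have hc := hQ c List.mem_cons_self
      have hy' : IsQ y' := fun a ha => hQ a (List.mem_cons_of_mem _ ha)
      have hxy : c :: y' = F c (y'.map (fun a => mods4 (a - c))) := by
        simp only [F, List.cons.injEq, true_and]
        exact (F_right_inv hy').symm
      have hyQ : IsQ (y'.map (fun a => mods4 (a - c))) := by
        intro a ha
        obtain ⟨b, _, rfl⟩ := List.mem_map.mp ha
        exact mods4_range _
      have hylen : (y'.map (fun a => mods4 (a - c))).length = m := by
        simp only [List.map_map, List.length_map]
        simpa using hlen
      have hyg : g 0 (y'.map (fun a => mods4 (a - c))) ≤ T - c := by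
        have h1 := g_F hc.1 hc.2 (y'.map (fun a => mods4 (a - c)))
        rw [← hxy] at h1
        omega
      have hym : (y'.map (fun a => mods4 (a - c))) ∈ W m (T - c) :=
        mem_W_iff.mpr ⟨hylen, hyQ, hyg⟩
      have h14 : c = 1 ∨ c = 2 ∨ c = 3 ∨ c = 4 := by omega
      rcases h14 with rfl | rfl | rfl | rfl
      · exact Or.inl (Or.inl (Or.inl ⟨_, hym, hxy.symm⟩))
      · exact Or.inl (Or.inl (Or.inr ⟨_, hym, hxy.symm⟩))
      · exact Or.inl (Or.inr ⟨_, hym, hxy.symm⟩)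
      · exact Or.inr ⟨_, hym, hxy.symm⟩
  · rintro (((⟨y, hy, rfl⟩ | ⟨y, hy, rfl⟩) | ⟨y, hy, rfl⟩) | ⟨y, hy, rfl⟩)
    · exact F_mem (by norm_num) (by norm_num) hy
    · exact F_mem (by norm_num) (by norm_num) hy
    · exact F_mem (by norm_num) (by norm_num) hy
    · exact F_mem (by norm_num) (by norm_num) hy

lemma F_disj {c d : ℤ} (h : c ≠ d) (s t : Set (List ℤ)) :
    Disjoint (F c '' s) (F d '' t) := by
  rw [Set.disjoint_left]
  rintro x ⟨y, _, rfl⟩ ⟨z, _, hz⟩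
  exact h ((List.cons.injEq _ _ _ _).mp hz).1.symm

end ARec

/-- the recursion `A(n,T) = ∑_{k=1}^{4} A(n-1, T-k)`. -/
theorem A_recursion (n : ℕ) (hn : 2 ≤ n) (T : ℤ) :
    A n T = A (n - 1) (T - 1) + A (n - 1) (T - 2) + A (n - 1) (T - 3) + A (n - 1) (T - 4) := by
  open ARec in
  obtain ⟨m, rfl⟩ : ∃ m, n = m + 1 := ⟨n - 1, by omega⟩
  simp only [Nat.add_sub_cancel]
  have f1 := (W_finite m (T - 1)).image (F 1)
  have f2 := (W_finite m (T - 2)).image (F 2)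
  have f3 := (W_finite m (T - 3)).image (F 3)
  have f4 := (W_finite m (T - 4)).image (F 4)
  unfold A
  rw [W_eq m T,
    Set.ncard_union_eq (by
      rw [Set.disjoint_union_left, Set.disjoint_union_left]
      exact ⟨⟨F_disj (by norm_num) _ _, F_disj (by norm_num) _ _⟩, F_disj (by norm_num) _ _⟩)
      ((f1.union f2).union f3) f4,
    Set.ncard_union_eq (by
      rw [Set.disjoint_union_left]
      exact ⟨F_disj (by norm_num) _ _, F_disj (by norm_num) _ _⟩) (f1.union f2) f3,
    Set.ncard_union_eq (F_disj (by norm_num) _ _) f1 f2,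
    Set.ncard_image_of_injOn (F_injOn 1 m (T - 1)),
    Set.ncard_image_of_injOn (F_injOn 2 m (T - 2)),
    Set.ncard_image_of_injOn (F_injOn 3 m (T - 3)),
    Set.ncard_image_of_injOn (F_injOn 4 m (T - 4))]
end
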